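/- For every n-player game p: X = ∏ᵢ₌₁ⁿ Xᵢ → [0,1]ⁿ with compacta Xᵢ and continuous p, every continuous t-norm ∗, every player i, and every capacity νᵢ ∈ MX₋ᵢ, the best response set R*ᵢ(νᵢ) = {x ∈ Xᵢ : P*ᵢ(x, νᵢ) = max{P*ᵢ(z, νᵢ) : z ∈ Xᵢ}} is a nonempty compact subset of Xᵢ. -/

import Mathlib

open Set TopologicalSpace

universe u v

/-- A (upper-semicontinuous) capacity on a topological space `X`:
a normalized monotone set function on the closed subsets, upper semicontinuous
in the sense of Zarichnyi–Nykyforchyn. -/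
structure Capacity (X : Type u) [TopologicalSpace X] : Type u where
  toFun : Closeds X → ℝ
  empty' : toFun ⊥ = 0
  univ' : toFun ⊤ = 1
  mono' : ∀ F G : Closeds X, F ≤ G → toFun F ≤ toFun G
  usc' : ∀ (F : Closeds X) (a : ℝ), toFun F < a →
    ∃ O : Set X, IsOpen O ∧ (F : Set X) ⊆ O ∧ ∀ B : Closeds X, (B : Set X) ⊆ O → toFun B < a

namespace Capacity

variable {X : Type u} [TopologicalSpace X]

/-- Value of a capacity on (the closure of) an arbitrary set; on closed sets this is
the value of the capacity. -/
def cval (ν : Capacity X) (A : Set X) : ℝ := ν.toFun ⟨closure A, isClosed_closure⟩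

/-- The sup-extension of a capacity to open sets:
`ν(U) = sup {ν K : K closed, K ⊆ U}`. -/
noncomputable def oval (ν : Capacity X) (U : Set X) : ℝ :=
  sSup {r : ℝ | ∃ K : Closeds X, (K : Set X) ⊆ U ∧ ν.toFun K = r}

end Capacity

/-- The topology on the space `MX` of capacities, generated by the subbase
`O₋(F,a) = {c : c(F) < a}` (`F` closed) and `O₊(U,a) = {c : c(U) > a}` (`U` open). -/
instance capacityTopology (X : Type u) [TopologicalSpace X] : TopologicalSpace (Capacity X) :=
  TopologicalSpace.generateFrom
    ({S | ∃ (F : Closeds X) (a : ℝ), a ∈ Icc (0:ℝ) 1 ∧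
        S = {c : Capacity X | c.toFun F < a}} ∪
     {S | ∃ U : Set X, IsOpen U ∧ ∃ a ∈ Icc (0:ℝ) 1,
        S = {c : Capacity X | a < c.oval U}})

/-- A possibility capacity: `ν(A ∪ B) = max (ν A) (ν B)` on closed sets. -/
def IsPossibility {X : Type u} [TopologicalSpace X] (ν : Capacity X) : Prop :=
  ∀ A B : Closeds X, ν.toFun (A ⊔ B) = max (ν.toFun A) (ν.toFun B)

/-- A necessity capacity: `ν(A ∩ B) = min (ν A) (ν B)` on closed sets. -/
def IsNecessity {X : Type u} [TopologicalSpace X] (ν : Capacity X) : Prop :=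
  ∀ A B : Closeds X, ν.toFun (A ⊓ B) = min (ν.toFun A) (ν.toFun B)

/-- A triangular norm on `[0,1]`. -/
structure Tnorm : Type where
  toFun : ℝ → ℝ → ℝ
  mem' : ∀ s ∈ Icc (0:ℝ) 1, ∀ t ∈ Icc (0:ℝ) 1, toFun s t ∈ Icc (0:ℝ) 1
  comm' : ∀ s ∈ Icc (0:ℝ) 1, ∀ t ∈ Icc (0:ℝ) 1, toFun s t = toFun t s
  assoc' : ∀ s ∈ Icc (0:ℝ) 1, ∀ t ∈ Icc (0:ℝ) 1, ∀ r ∈ Icc (0:ℝ) 1,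
    toFun (toFun s t) r = toFun s (toFun t r)
  mono' : ∀ s₁ ∈ Icc (0:ℝ) 1, ∀ s₂ ∈ Icc (0:ℝ) 1, ∀ t₁ ∈ Icc (0:ℝ) 1, ∀ t₂ ∈ Icc (0:ℝ) 1,
    s₁ ≤ s₂ → t₁ ≤ t₂ → toFun s₁ t₁ ≤ toFun s₂ t₂
  one' : ∀ s ∈ Icc (0:ℝ) 1, toFun s 1 = s

/-- Continuity of a t-norm (on the unit square). -/
def Tnorm.Cont (star : Tnorm) : Prop :=
  ContinuousOn (fun q : ℝ × ℝ => star.toFun q.1 q.2) (Icc 0 1 ×ˢ Icc 0 1)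

/-- The t-normed (fuzzy) integral `∫^{∨∗} f dν = sup { ν(f⁻¹[t,1]) ∗ t : t ∈ [0,1] }`. -/
noncomputable def tInt {X : Type u} [TopologicalSpace X] (star : Tnorm) (ν : Capacity X) (f : X → ℝ) : ℝ :=
  sSup {r : ℝ | ∃ t ∈ Icc (0:ℝ) 1, r = star.toFun (ν.cval (f ⁻¹' Icc t 1)) t}
/-- Expected payoff of player `i` choosing pure strategy `x`, given belief `ν` about the
opponents' strategy combinations: `P*ᵢ(x, ν) = ∫^{∨∗}_{X₋ᵢ} pᵢ(x, ·) dν`. -/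
noncomputable def Pexp {n : ℕ} (X : Fin (n+1) → Type u) [∀ j, TopologicalSpace (X j)]
    (p : (∀ j, X j) → Fin (n+1) → ℝ) (star : Tnorm) (i : Fin (n+1))
    (x : X i) (ν : Capacity (∀ k : Fin n, X (i.succAbove k))) : ℝ :=
  tInt star ν fun y => p (i.insertNth x y) i

/-- The best response set of player `i` given belief `ν`:
`R*ᵢ(ν) = {x : P*ᵢ(x, ν) = max_z P*ᵢ(z, ν)}`. -/
noncomputable def BestResp {n : ℕ} (X : Fin (n+1) → Type u) [∀ j, TopologicalSpace (X j)]
    (p : (∀ j, X j) → Fin (n+1) → ℝ) (star : Tnorm) (i : Fin (n+1))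
    (ν : Capacity (∀ k : Fin n, X (i.succAbove k))) : Set (X i) :=
  {x : X i | Pexp X p star i x ν = sSup (Set.range fun z : X i => Pexp X p star i z ν)}

open Filter Metric Topology

section Aux

variable {Y : Type v} [TopologicalSpace Y]

lemma cap_nonneg (ν : Capacity Y) (F : Closeds Y) : 0 ≤ ν.toFun F :=
  ν.empty' ▸ ν.mono' ⊥ F bot_le

lemma cap_le_one (ν : Capacity Y) (F : Closeds Y) : ν.toFun F ≤ 1 :=
  ν.univ' ▸ ν.mono' F ⊤ le_top

lemma cval_closed (ν : Capacity Y) {A : Set Y} (hA : IsClosed A) :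
    ν.cval A = ν.toFun ⟨A, hA⟩ := by
  unfold Capacity.cval
  congr 1
  exact SetLike.coe_injective hA.closure_eq

lemma cval_mem (ν : Capacity Y) (A : Set Y) : ν.cval A ∈ Icc (0:ℝ) 1 :=
  ⟨cap_nonneg ν _, cap_le_one ν _⟩

lemma tSet_subset (star : Tnorm) (ν : Capacity Y) (f : Y → ℝ) :
    {r : ℝ | ∃ t ∈ Icc (0:ℝ) 1, r = star.toFun (ν.cval (f ⁻¹' Icc t 1)) t} ⊆ Icc (0:ℝ) 1 := by
  rintro r ⟨t, ht, rfl⟩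
  exact star.mem' _ (cval_mem ν _) t ht

lemma tSet_nonempty (star : Tnorm) (ν : Capacity Y) (f : Y → ℝ) :
    {r : ℝ | ∃ t ∈ Icc (0:ℝ) 1, r = star.toFun (ν.cval (f ⁻¹' Icc t 1)) t}.Nonempty :=
  ⟨_, 0, ⟨le_refl 0, zero_le_one⟩, rfl⟩

lemma tSet_bdd (star : Tnorm) (ν : Capacity Y) (f : Y → ℝ) :
    BddAbove {r : ℝ | ∃ t ∈ Icc (0:ℝ) 1, r = star.toFun (ν.cval (f ⁻¹' Icc t 1)) t} :=
  ⟨1, fun _ hr => (tSet_subset star ν f hr).2⟩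

lemma le_tInt (star : Tnorm) (ν : Capacity Y) (f : Y → ℝ) {t : ℝ} (ht : t ∈ Icc (0:ℝ) 1) :
    star.toFun (ν.cval (f ⁻¹' Icc t 1)) t ≤ tInt star ν f :=
  le_csSup (tSet_bdd star ν f) ⟨t, ht, rfl⟩

lemma tInt_mem (star : Tnorm) (ν : Capacity Y) (f : Y → ℝ) : tInt star ν f ∈ Icc (0:ℝ) 1 := by
  constructor
  · exact le_trans (star.mem' _ (cval_mem ν _) 0 ⟨le_refl 0, zero_le_one⟩).1
      (le_tInt star ν f ⟨le_refl 0, zero_le_one⟩)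
  · exact csSup_le (tSet_nonempty star ν f) (fun r hr => (tSet_subset star ν f hr).2)

end Aux

section USC

open Metric Topology

variable {Y : Type v} [TopologicalSpace Y]

lemma tInt_usc {Z : Type u} [TopologicalSpace Z] [CompactSpace Y]
    (ν : Capacity Y) (star : Tnorm) (hstar : star.Cont)
    (g : Z → Y → ℝ) (hg : Continuous fun q : Z × Y => g q.1 q.2)
    (hg01 : ∀ z y, g z y ∈ Icc (0:ℝ) 1) :
    UpperSemicontinuous fun z => tInt star ν (g z) := by
  intro z₀ a ha
  simp only at ha
  set a' := (tInt star ν (g z₀) + a) / 2 with ha'def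
  have ha'1 : tInt star ν (g z₀) < a' := by rw [ha'def]; linarith
  have ha'2 : a' < a := by rw [ha'def]; linarith
  have hgz : ∀ z : Z, Continuous (g z) := fun z =>
    hg.comp (continuous_const.prodMk continuous_id)
  have hFcl : ∀ (z : Z) (s : ℝ), IsClosed (g z ⁻¹' Icc s 1) := fun z s =>
    isClosed_Icc.preimage (hgz z)
  have key : ∀ t ∈ Icc (0:ℝ) 1, ∃ δ > 0, ∃ U ∈ 𝓝 z₀, ∀ z ∈ U, ∀ s ∈ Icc (0:ℝ) 1,
      |s - t| < δ → star.toFun (ν.cval (g z ⁻¹' Icc s 1)) s < a' := by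
    intro t ht
    set c := ν.cval (g z₀ ⁻¹' Icc t 1) with hcdef
    have hct : star.toFun c t < a' := lt_of_le_of_lt (le_tInt star ν (g z₀) ht) ha'1
    have hcmem : c ∈ Icc (0:ℝ) 1 := cval_mem ν _
    have hcw : ContinuousWithinAt (fun q : ℝ × ℝ => star.toFun q.1 q.2)
        (Icc 0 1 ×ˢ Icc 0 1) (c, t) := hstar _ (mk_mem_prod hcmem ht)
    have hev : {q : ℝ × ℝ | star.toFun q.1 q.2 < a'} ∈
        𝓝[Icc (0:ℝ) 1 ×ˢ Icc (0:ℝ) 1] (c, t) := hcw (Iio_mem_nhds hct)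
    rw [Metric.mem_nhdsWithin_iff] at hev
    obtain ⟨ε, hε, hball⟩ := hev
    set c' := min (c + ε / 2) 1 with hc'def
    set t' := min (t + ε / 2) 1 with ht'def
    have hc'mem : c' ∈ Icc (0:ℝ) 1 :=
      ⟨le_min (by linarith [hcmem.1]) zero_le_one, min_le_right _ _⟩
    have ht'mem : t' ∈ Icc (0:ℝ) 1 :=
      ⟨le_min (by linarith [ht.1]) zero_le_one, min_le_right _ _⟩
    have hcc' : c ≤ c' := le_min (by linarith) hcmem.2
    have hc'le : c' ≤ c + ε / 2 := min_le_left _ _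
    have htt' : t ≤ t' := le_min (by linarith) ht.2
    have ht'le : t' ≤ t + ε / 2 := min_le_left _ _
    have hqball : (c', t') ∈ Metric.ball (c, t) ε := by
      rw [Metric.mem_ball, Prod.dist_eq]
      apply max_lt
      · rw [Real.dist_eq, abs_lt]; constructor <;> linarith
      · rw [Real.dist_eq, abs_lt]; constructor <;> linarith
    have hstar_lt : star.toFun c' t' < a' :=
      hball (mem_inter hqball (mk_mem_prod hc'mem ht'mem))
    have hcc : ν.toFun ⟨g z₀ ⁻¹' Icc t 1, hFcl z₀ t⟩ = c := (cval_closed ν _).symm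
    obtain ⟨O, hOopen, hFO, hOB⟩ :=
      ν.usc' ⟨g z₀ ⁻¹' Icc t 1, hFcl z₀ t⟩ (c + ε / 2) (by rw [hcc]; linarith)
    have claim : ∃ δ' > 0, ∃ U ∈ 𝓝 z₀, ∀ z ∈ U, ∀ s : ℝ, t - δ' < s →
        g z ⁻¹' Icc s 1 ⊆ O := by
      by_cases hK : Oᶜ = (∅ : Set Y)
      · refine ⟨1, one_pos, Set.univ, Filter.univ_mem, fun z _ s _ => ?_⟩
        have hO : O = Set.univ := compl_empty_iff.mp hK
        rw [hO]; exact subset_univ _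
      · have hKne : (Oᶜ : Set Y).Nonempty := nonempty_iff_ne_empty.mpr hK
        have hKcomp : IsCompact (Oᶜ : Set Y) := hOopen.isClosed_compl.isCompact
        obtain ⟨y₀, hy₀K, hy₀max⟩ := hKcomp.exists_isMaxOn hKne (hgz z₀).continuousOn
        have hy₀lt : g z₀ y₀ < t := by
          by_contra h
          push_neg at h
          exact hy₀K (hFO ⟨h, (hg01 z₀ y₀).2⟩)
        set δ' := (t - g z₀ y₀) / 2 with hδ'def
        have hδ'pos : 0 < δ' := by rw [hδ'def]; linarith
        have hsubN : ({z₀} : Set Z) ×ˢ (Oᶜ : Set Y) ⊆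
            (fun q : Z × Y => g q.1 q.2) ⁻¹' Iio (t - δ') := by
          rintro ⟨z, y⟩ ⟨hz, hy⟩
          simp only [mem_singleton_iff] at hz
          have hle : g z y ≤ g z₀ y₀ := by rw [hz]; exact hy₀max hy
          simp only [mem_preimage, mem_Iio, hδ'def]
          linarith
        obtain ⟨u, v, hu, hv, hz₀u, hKv, huv⟩ := generalized_tube_lemma isCompact_singleton
          hKcomp (isOpen_Iio.preimage hg) hsubN
        refine ⟨δ', hδ'pos, u, hu.mem_nhds (hz₀u rfl), fun z hz s hs y hy => ?_⟩
        by_contra hyO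
        have hmem : (z, y) ∈ u ×ˢ v := ⟨hz, hKv hyO⟩
        have hlt := huv hmem
        simp only [mem_preimage, mem_Iio] at hlt
        have : s ≤ g z y := hy.1
        linarith
    obtain ⟨δ', hδ'pos, U, hU, hP⟩ := claim
    refine ⟨min δ' (ε / 2), lt_min hδ'pos (by linarith), U, hU, ?_⟩
    intro z hz s hs hst
    have habs := abs_lt.mp hst
    have hminl := min_le_left δ' (ε / 2)
    have hminr := min_le_right δ' (ε / 2)
    have hsub : g z ⁻¹' Icc s 1 ⊆ O := hP z hz s (by linarith [habs.1])
    have hlt : ν.toFun ⟨g z ⁻¹' Icc s 1, hFcl z s⟩ < c + ε / 2 := hOB _ hsub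
    rw [cval_closed ν (hFcl z s)]
    calc star.toFun (ν.toFun ⟨g z ⁻¹' Icc s 1, hFcl z s⟩) s
        ≤ star.toFun c' t' :=
          star.mono' _ ⟨cap_nonneg ν _, cap_le_one ν _⟩ _ hc'mem _ hs _ ht'mem
            (le_min hlt.le (cap_le_one ν _)) (le_min (by linarith [habs.2]) hs.2)
      _ < a' := hstar_lt
  choose! δ hδpos U hU hP using key
  obtain ⟨T, hTmem, hTcov⟩ := (isCompact_Icc : IsCompact (Icc (0:ℝ) 1)).elim_nhds_subcover
    (fun t => Metric.ball t (δ t)) (fun t ht => Metric.ball_mem_nhds t (hδpos t ht))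
  have hW : (⋂ t ∈ T, U t) ∈ 𝓝 z₀ :=
    (Filter.biInter_finset_mem T).mpr (fun t ht => hU t (hTmem t ht))
  filter_upwards [hW] with z hz
  have hbdd : ∀ r ∈ {r : ℝ | ∃ s ∈ Icc (0:ℝ) 1,
      r = star.toFun (ν.cval (g z ⁻¹' Icc s 1)) s}, r ≤ a' := by
    rintro r ⟨s, hs, rfl⟩
    obtain ⟨t, htT, hst⟩ := mem_iUnion₂.mp (hTcov hs)
    have hzU : z ∈ U t := mem_iInter₂.mp hz t htT
    rw [Metric.mem_ball, Real.dist_eq] at hst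
    exact (hP t (hTmem t htT) z hzU s hs hst).le
  have hle : tInt star ν (g z) ≤ a' := csSup_le (tSet_nonempty star ν (g z)) hbdd
  exact lt_of_le_of_lt hle ha'2

end USC


/-- for any `n`-player game with (nonempty) compacta `Xᵢ`, continuous payoff
map into `[0,1]ⁿ`, any continuous t-norm `∗`, any player `i` and any capacity
`νᵢ ∈ MX₋ᵢ`, the best response set `R*ᵢ(νᵢ)` is a nonempty compact subset of `Xᵢ`. -/
theorem best_response_nonempty_compact {n : ℕ} (X : Fin (n+1) → Type u)
    [∀ j, TopologicalSpace (X j)] [∀ j, CompactSpace (X j)] [∀ j, T2Space (X j)]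
    [∀ j, Nonempty (X j)]
    (p : (∀ j, X j) → Fin (n+1) → ℝ) (hp : Continuous p)
    (hp01 : ∀ x j, p x j ∈ Icc (0:ℝ) 1)
    (star : Tnorm) (hstar : star.Cont) (i : Fin (n+1))
    (ν : Capacity (∀ k : Fin n, X (i.succAbove k))) :
    (BestResp X p star i ν).Nonempty ∧ IsCompact (BestResp X p star i ν) := by
  classical
  set g : X i → (∀ k : Fin n, X (i.succAbove k)) → ℝ :=
    fun x y => p (i.insertNth x y) i with hgdef
  have hgc : Continuous fun q : X i × (∀ k : Fin n, X (i.succAbove k)) => g q.1 q.2 := by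
    have h1 : Continuous fun q : X i × (∀ k : Fin n, X (i.succAbove k)) =>
        i.insertNth q.1 q.2 := continuous_fst.finInsertNth i continuous_snd
    exact (continuous_apply i).comp (hp.comp h1)
  have hg01 : ∀ x y, g x y ∈ Icc (0:ℝ) 1 := fun x y => hp01 _ i
  have husc : UpperSemicontinuous fun x : X i => tInt star ν (g x) :=
    tInt_usc ν star hstar g hgc hg01
  have hopen : ∀ b : ℝ, IsOpen {x : X i | Pexp X p star i x ν < b} := fun b =>
    husc.isOpen_preimage b
  set M := sSup (Set.range fun z : X i => Pexp X p star i z ν) with hM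
  have hbddR : BddAbove (Set.range fun z : X i => Pexp X p star i z ν) := by
    refine ⟨1, ?_⟩
    rintro r ⟨x, rfl⟩
    exact (tInt_mem star ν (g x)).2
  have hneR : (Set.range fun z : X i => Pexp X p star i z ν).Nonempty :=
    Set.range_nonempty _
  have hle : ∀ x, Pexp X p star i x ν ≤ M := fun x => le_csSup hbddR ⟨x, rfl⟩
  have hnon : ∃ x, Pexp X p star i x ν = M := by
    by_contra h
    push_neg at h
    have hlt : ∀ x, Pexp X p star i x ν < M := fun x => lt_of_le_of_ne (hle x) (h x)
    obtain ⟨T, -, hTcov⟩ := isCompact_univ.elim_nhds_subcover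
      (fun x : X i => {z : X i | Pexp X p star i z ν < (Pexp X p star i x ν + M) / 2})
      (fun x _ => (hopen _).mem_nhds (by simp only [mem_setOf_eq]; linarith [hlt x]))
    obtain ⟨x₀⟩ := ‹∀ j, Nonempty (X j)› i
    obtain ⟨t₀, ht₀T, -⟩ := mem_iUnion₂.mp (hTcov (mem_univ x₀))
    have hTne : T.Nonempty := ⟨t₀, ht₀T⟩
    have hbound : ∀ x : X i, Pexp X p star i x ν ≤
        T.sup' hTne (fun z => (Pexp X p star i z ν + M) / 2) := by
      intro x
      obtain ⟨t, htT, hxt⟩ := mem_iUnion₂.mp (hTcov (mem_univ x))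
      simp only [mem_setOf_eq] at hxt
      exact le_trans hxt.le (Finset.le_sup' (fun z => (Pexp X p star i z ν + M) / 2) htT)
    have hlt2 : T.sup' hTne (fun z => (Pexp X p star i z ν + M) / 2) < M :=
      (Finset.sup'_lt_iff hTne).mpr (fun x _ => by linarith [hlt x])
    have hge : M ≤ T.sup' hTne (fun z => (Pexp X p star i z ν + M) / 2) := by
      rw [hM]
      refine csSup_le hneR ?_
      rintro r ⟨x, rfl⟩
      exact hbound x
    linarith
  obtain ⟨xs, hxs⟩ := hnon
  have hBR : BestResp X p star i ν = {x : X i | M ≤ Pexp X p star i x ν} := by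
    ext x
    simp only [BestResp, mem_setOf_eq, ← hM]
    exact ⟨fun h => h.ge, fun h => le_antisymm (hle x) h⟩
  have hBRclosed : IsClosed (BestResp X p star i ν) := by
    rw [hBR]
    have hcompl : {x : X i | M ≤ Pexp X p star i x ν} =
        {x : X i | Pexp X p star i x ν < M}ᶜ := by
      ext x; simp [not_lt]
    rw [hcompl]
    exact (hopen M).isClosed_compl
  exact ⟨⟨xs, by rw [hBR]; exact hxs.ge⟩, hBRclosed.isCompact⟩
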